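/- Let a locally compact abelian group G act via α on a Hausdorff uniform space (X, 𝒰) such that the action is equicontinuous (for every U ∈ 𝒰 there exists an open set O ⊆ G containing 0 with (α(s,x), x) ∈ U for all s ∈ O and all x ∈ X). Then x ∈ X is Bohr-type almost periodic (for every U ∈ 𝒰 the set P_U(x) = {t ∈ G : (α(t,x), x) ∈ U} is relatively dense in G) if and only if x is pseudo Bochner-type almost periodic (for every U ∈ 𝒰 the set P_U(x) is finitely relatively dense in G). -/

import Mathlib

open Uniformity Pointwise

/-- Let a locally compact abelian group `G` act equicontinuously via `α` on a
Hausdorff uniform space `(X, 𝒰)`. Then `x` is Bohr-type almost periodic (all sets of almost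
periods are relatively dense) iff `x` is pseudo Bochner-type almost periodic (all sets of
almost periods are finitely relatively dense). -/
theorem stmt6 {G X : Type*}
    [AddCommGroup G] [TopologicalSpace G] [IsTopologicalAddGroup G]
    [LocallyCompactSpace G] [T2Space G]
    [UniformSpace X] [T2Space X]
    (α : G → X → X)
    (hzero : ∀ x, α 0 x = x)
    (hadd : ∀ s t x, α s (α t x) = α (s + t) x)
    (hequi : ∀ U ∈ 𝓤 X, ∃ O : Set G, IsOpen O ∧ (0 : G) ∈ O ∧
      ∀ s ∈ O, ∀ y : X, (α s y, y) ∈ U)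
    (x : X) :
    (∀ U ∈ 𝓤 X, ∃ K : Set G, IsCompact K ∧ {t : G | (α t x, x) ∈ U} + K = Set.univ)
      ↔
    (∀ U ∈ 𝓤 X, ∃ F : Set G, F.Finite ∧ {t : G | (α t x, x) ∈ U} + F = Set.univ) := by
  constructor
  · intro h U hU
    obtain ⟨V, hV, hVU⟩ := comp_mem_uniformity_sets hU
    obtain ⟨O, hOopen, hO0, hOs⟩ := hequi V hV
    obtain ⟨K, hK, hKcov⟩ := h V hV
    have hcov : K ⊆ ⋃ k ∈ K, {k} + O := by
      intro k hk
      exact Set.mem_biUnion hk ⟨k, rfl, 0, hO0, by simp⟩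
    obtain ⟨F, hFK, hFfin, hFcov⟩ :=
      hK.elim_finite_subcover_image (fun k _ => hOopen.add_left) hcov
    refine ⟨F, hFfin, Set.eq_univ_of_forall fun g => ?_⟩
    have hg : g ∈ {t : G | (α t x, x) ∈ V} + K := hKcov ▸ Set.mem_univ g
    obtain ⟨t, ht, k, hk, rfl⟩ := hg
    obtain ⟨f, hf, hmem⟩ := Set.mem_iUnion₂.1 (hFcov hk)
    rw [Set.singleton_add, Set.mem_image] at hmem
    obtain ⟨s, hs, has⟩ := hmem
    refine ⟨t + s, ?_, f, hf, by simp only; rw [← has]; abel⟩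
    have h1 : (α s (α t x), α t x) ∈ V := hOs s hs (α t x)
    rw [hadd, add_comm s t] at h1
    exact hVU ⟨α t x, h1, ht⟩
  · intro h U hU
    obtain ⟨F, hFfin, hF⟩ := h U hU
    exact ⟨F, hFfin.isCompact, hF⟩
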